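/- Weighted dyadic ℓ^p–L^p comparability: let n ≥ 1, 1 < p < ∞, p' = p/(p−1), and let s ∈ ℝ satisfy s > −n/p'. Then there exists a constant C ≥ 1, depending only on n, p, s, such that for every sequence (a_j)_{j ∈ ℤ} of nonnegative reals one has C^{−1} Σ_{j∈ℤ} a_j^p ≤ ∫_{ℝ^n} ( Σ_{j∈ℤ} a_j · 2^{(s + n/p') j} · (2^j + |x|)^{−n−s} )^p dx ≤ C Σ_{j∈ℤ} a_j^p (all quantities interpreted in [0,∞]). -/
import Mathlib


open MeasureTheory Filter
open scoped ENNReal Topology BigOperators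

noncomputable section

abbrev Euc (n : ℕ) := EuclideanSpace ℝ (Fin n)

/-- The dyadically rescaled kernel `x ↦ 2^{(s+n/p')j}(2^j + |x|)^{-n-s}`,
where `p' = p/(p-1)`. -/
def kern (n : ℕ) (p s : ℝ) (j : ℤ) (x : Euc n) : ℝ :=
  (2 : ℝ) ^ ((s + n / (p / (p - 1))) * (j : ℝ))
    * ((2 : ℝ) ^ (j : ℝ) + ‖x‖) ^ (-(n : ℝ) - s)

lemma aux_holder {ι : Type*} (w f : ι → ℝ≥0∞) {p : ℝ} (hp : 1 ≤ p) :
    ∑' i, w i * f i ≤ (∑' i, w i) ^ (1 - p⁻¹) * (∑' i, w i * f i ^ p) ^ p⁻¹ := by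
  rw [ENNReal.tsum_eq_iSup_sum]
  refine iSup_le fun s => (ENNReal.inner_le_weight_mul_Lp_of_nonneg s hp w f).trans ?_
  have h1 : (0:ℝ) ≤ 1 - p⁻¹ := by
    have : p⁻¹ ≤ 1 := inv_le_one_of_one_le₀ hp
    linarith
  gcongr <;> exact ENNReal.sum_le_tsum s

lemma aux_holder_pow {ι : Type*} (w f : ι → ℝ≥0∞) {p : ℝ} (hp : 1 < p) :
    (∑' i, w i * f i) ^ p ≤ (∑' i, w i) ^ (p - 1) * (∑' i, w i * f i ^ p) := by
  have hp0 : (0:ℝ) < p := lt_trans one_pos hp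
  calc (∑' i, w i * f i) ^ p
      ≤ ((∑' i, w i) ^ (1 - p⁻¹) * (∑' i, w i * f i ^ p) ^ p⁻¹) ^ p :=
        ENNReal.rpow_le_rpow (aux_holder w f hp.le) hp0.le
    _ = (∑' i, w i) ^ (p - 1) * (∑' i, w i * f i ^ p) := by
        rw [ENNReal.mul_rpow_of_nonneg _ _ hp0.le, ← ENNReal.rpow_mul, ← ENNReal.rpow_mul]
        rw [show (1 - p⁻¹) * p = p - 1 by field_simp, inv_mul_cancel₀ hp0.ne', ENNReal.rpow_one]

lemma aux_geom {δ : ℝ} (hδ : 0 < δ) :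
    Summable (fun m : ℤ => (2:ℝ) ^ (-δ * |(m:ℝ)|)) := by
  have h2 : (0:ℝ) ≤ 2 := by norm_num
  have key : ∀ m : ℤ, (2:ℝ) ^ (-δ * |(m:ℝ)|) = ((2:ℝ) ^ (-δ)) ^ m.natAbs := by
    intro m
    rw [← Real.rpow_natCast ((2:ℝ) ^ (-δ)) m.natAbs, ← Real.rpow_mul h2]
    congr 1
    rw [Nat.cast_natAbs]
    push_cast
    ring
  simp only [key]
  have hr0 : (0:ℝ) ≤ (2:ℝ) ^ (-δ) := (Real.rpow_pos_of_pos two_pos _).le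
  have hr1 : (2:ℝ) ^ (-δ) < 1 :=
    Real.rpow_lt_one_of_one_lt_of_neg one_lt_two (neg_neg_iff_pos.mpr hδ)
  have hgeom : Summable (fun k : ℕ => ((2:ℝ) ^ (-δ)) ^ k) :=
    summable_geometric_of_lt_one hr0 hr1
  refine Summable.of_nat_of_neg ?_ ?_
  · simpa using hgeom
  · simpa using hgeom

set_option maxHeartbeats 2000000 in
/-- Weighted dyadic `ℓ^p`–`L^p` comparability: for `1 < p < ∞` and
`s > -n/p'`, the `L^p(ℝ^n)` norm (to the `p`-th power) of
`∑_j a_j 2^{(s+n/p')j}(2^j+|x|)^{-n-s}` is comparable to `∑_j a_j^p`. -/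
theorem dyadic_kernel_lp_comparability
    (n : ℕ) (hn : 1 ≤ n) (p s : ℝ) (hp : 1 < p)
    (hs : -(n / (p / (p - 1))) < s) :
    ∃ C : ℝ, 1 ≤ C ∧
      ∀ a : ℤ → ℝ, (∀ j : ℤ, 0 ≤ a j) →
        (ENNReal.ofReal C)⁻¹ * (∑' j : ℤ, ENNReal.ofReal (a j ^ p))
            ≤ (∫⁻ x : Euc n,
                (∑' j : ℤ, ENNReal.ofReal (a j * kern n p s j x)) ^ p) ∧
        (∫⁻ x : Euc n,
            (∑' j : ℤ, ENNReal.ofReal (a j * kern n p s j x)) ^ p)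
          ≤ ENNReal.ofReal C * ∑' j : ℤ, ENNReal.ofReal (a j ^ p) := by
  have hp0 : (0:ℝ) < p := lt_trans one_pos hp
  have hp1 : (0:ℝ) < p - 1 := by linarith
  have hn0 : (0:ℝ) < (n:ℝ) := by exact_mod_cast Nat.lt_of_lt_of_le Nat.zero_lt_one hn
  set β : ℝ := (n:ℝ) / p with hβdef
  set τ : ℝ := s + (n:ℝ) / (p / (p - 1)) with hτdef
  have hβ : 0 < β := div_pos hn0 hp0
  have hqβ : (n:ℝ) / (p / (p - 1)) + β = (n:ℝ) := by
    rw [hβdef]; field_simp; ring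
  have hτ : 0 < τ := by rw [hτdef]; linarith
  have hτβ : τ + β = s + (n:ℝ) := by rw [hτdef]; linarith
  set δ : ℝ := min τ β with hδdef
  have hδ : 0 < δ := lt_min hτ hβ
  have hδτ : δ ≤ τ := min_le_left _ _
  have hδβ : δ ≤ β := min_le_right _ _
  -- basic rpow facts for base 2
  have two_rpow_pos : ∀ u : ℝ, (0:ℝ) < (2:ℝ) ^ u := fun u => Real.rpow_pos_of_pos two_pos u
  have two_rpow_mul : ∀ u v : ℝ, ((2:ℝ) ^ u) ^ v = (2:ℝ) ^ (u * v) := fun u v =>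
    (Real.rpow_mul (by norm_num) u v).symm
  have two_rpow_add : ∀ u v : ℝ, (2:ℝ) ^ (u + v) = (2:ℝ) ^ u * (2:ℝ) ^ v := fun u v =>
    Real.rpow_add two_pos u v
  have two_rpow_le : ∀ {u v : ℝ}, u ≤ v → (2:ℝ) ^ u ≤ (2:ℝ) ^ v := fun h =>
    Real.rpow_le_rpow_of_exponent_le one_le_two h
  have kern_eq : ∀ (j : ℤ) (x : Euc n),
      kern n p s j x = (2:ℝ) ^ (τ * (j:ℝ)) * ((2:ℝ) ^ (j:ℝ) + ‖x‖) ^ (-(τ + β)) := by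
    intro j x
    rw [kern, ← hτdef, show -(n:ℝ) - s = -(τ + β) by linarith]
  have kern_nonneg : ∀ (j : ℤ) (x : Euc n), 0 ≤ kern n p s j x := by
    intro j x
    rw [kern_eq]
    have h1 : (0:ℝ) < (2:ℝ) ^ (j:ℝ) + ‖x‖ := by positivity
    positivity
  -- the annuli
  set A : ℤ → Set (Euc n) := fun k =>
    Metric.ball (0 : Euc n) ((2:ℝ) ^ (k:ℝ)) \ Metric.ball 0 ((2:ℝ) ^ ((k:ℝ) - 1)) with hAdef
  have hmem : ∀ (k : ℤ) (x : Euc n),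
      x ∈ A k ↔ ((2:ℝ) ^ ((k:ℝ) - 1) ≤ ‖x‖ ∧ ‖x‖ < (2:ℝ) ^ (k:ℝ)) := by
    intro k x
    simp [hAdef, mem_ball_zero_iff, not_lt, and_comm]
  have hAmeas : ∀ k, MeasurableSet (A k) :=
    fun k => measurableSet_ball.diff measurableSet_ball
  have hdisj : Pairwise (Function.onFun Disjoint A) := by
    have key : ∀ k k' : ℤ, k < k' → Disjoint (A k) (A k') := by
      intro k k' hkk'
      refine Set.disjoint_left.mpr fun x hx hx' => ?_
      rw [hmem] at hx hx'
      have hc : ((k:ℝ)) ≤ (k':ℝ) - 1 := by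
        have : (k:ℝ) + 1 ≤ (k':ℝ) := by exact_mod_cast hkk'
        linarith
      have := (hx.2.trans_le (two_rpow_le hc)).trans_le hx'.1
      exact lt_irrefl _ this
    intro k k' hne
    rcases lt_or_gt_of_ne hne with h | h
    · exact key _ _ h
    · exact (key _ _ h).symm
  have hcover : ∀ x : Euc n, x ≠ 0 → ∃ k, x ∈ A k := by
    intro x hx
    have hx0 : 0 < ‖x‖ := norm_pos_iff.mpr hx
    obtain ⟨m, hm1, hm2⟩ := exists_mem_Ico_zpow hx0 one_lt_two
    refine ⟨m + 1, (hmem _ _).mpr ⟨?_, ?_⟩⟩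
    · rw [show ((m + 1 : ℤ):ℝ) - 1 = ((m:ℤ):ℝ) by push_cast; ring, Real.rpow_intCast]
      exact hm1
    · rw [show ((m + 1 : ℤ):ℝ) = (((m + 1 : ℤ)):ℝ) by norm_num, Real.rpow_intCast]
      exact hm2
  have hcompl : volume ((⋃ k, A k)ᶜ) = 0 := by
    have hsub : (⋃ k, A k)ᶜ ⊆ ({0} : Set (Euc n)) := by
      intro x hx
      by_contra hx0
      exact hx (Set.mem_iUnion.mpr (hcover x hx0))
    refine measure_mono_null hsub ?_
    haveI : Nonempty (Fin n) := ⟨⟨0, hn⟩⟩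
    haveI : Nontrivial (Euc n) := inferInstance
    exact measure_singleton 0
  -- volume facts
  haveI : Nonempty (Fin n) := ⟨⟨0, hn⟩⟩
  haveI : Nontrivial (Euc n) := inferInstance
  set V : ℝ≥0∞ := volume (Metric.ball (0 : Euc n) 1) with hVdef
  have hV0 : 0 < V := Metric.measure_ball_pos volume 0 one_pos
  have hVtop : V < ⊤ := measure_ball_lt_top
  have hball : ∀ k : ℤ, volume (Metric.ball (0 : Euc n) ((2:ℝ) ^ (k:ℝ)))
      = ENNReal.ofReal ((2:ℝ) ^ ((k:ℝ) * n)) * V := by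
    intro k
    rw [Measure.addHaar_ball volume 0 (two_rpow_pos _).le, finrank_euclideanSpace_fin]
    congr 2
    rw [← Real.rpow_natCast ((2:ℝ) ^ (k:ℝ)) n, two_rpow_mul]
  have hball' : ∀ k : ℤ, volume (Metric.ball (0 : Euc n) ((2:ℝ) ^ ((k:ℝ) - 1)))
      = ENNReal.ofReal ((2:ℝ) ^ (((k:ℝ) - 1) * n)) * V := by
    intro k
    rw [Measure.addHaar_ball volume 0 (two_rpow_pos _).le, finrank_euclideanSpace_fin]
    congr 2
    rw [← Real.rpow_natCast ((2:ℝ) ^ ((k:ℝ) - 1)) n, two_rpow_mul]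

  -- the discrete weight
  set φ : ℤ → ℝ := fun m => (2:ℝ) ^ (β + τ) * (2:ℝ) ^ (-δ * |(m:ℝ)|) with hφdef
  have hφ_nonneg : ∀ m, 0 ≤ φ m := fun m => by
    have := two_rpow_pos (β + τ)
    have := two_rpow_pos (-δ * |(m:ℝ)|)
    positivity
  have hφ_summable : Summable φ := (aux_geom hδ).mul_left _
  set Φ : ℝ≥0∞ := ∑' m : ℤ, ENNReal.ofReal (φ m) with hΦdef
  have hΦtop : Φ ≠ ⊤ := by
    rw [hΦdef, ← ENNReal.ofReal_tsum_of_nonneg hφ_nonneg hφ_summable]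
    exact ENNReal.ofReal_ne_top
  -- key kernel upper bound on the annulus A k
  have hkb : ∀ (k j : ℤ) (x : Euc n), x ∈ A k →
      kern n p s j x ≤ (2:ℝ) ^ (-β * (k:ℝ)) * φ (k - j) := by
    intro k j x hx
    obtain ⟨hx1, hx2⟩ := (hmem k x).mp hx
    have hφeq : (2:ℝ) ^ (-β * (k:ℝ)) * φ (k - j)
        = (2:ℝ) ^ (-β * (k:ℝ) + ((β + τ) + -δ * |((k - j : ℤ):ℝ)|)) := by
      rw [two_rpow_add, two_rpow_add, hφdef]
    have hexp_neg : -(τ + β) ≤ 0 := by linarith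
    rcases le_or_gt j (k - 1) with hjk | hjk
    · have hjkr : (j:ℝ) ≤ (k:ℝ) - 1 := by
        have : (j:ℝ) + 1 ≤ (k:ℝ) := by exact_mod_cast Int.add_one_le_iff.mpr (by omega)
        linarith
      have habs : |((k - j : ℤ):ℝ)| = (k:ℝ) - (j:ℝ) := by
        rw [abs_of_pos] <;> push_cast <;> linarith
      have hbase : (2:ℝ) ^ ((k:ℝ) - 1) ≤ (2:ℝ) ^ ((j:ℝ)) + ‖x‖ :=
        hx1.trans (le_add_of_nonneg_left (two_rpow_pos _).le)
      calc kern n p s j x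
          = (2:ℝ) ^ (τ * (j:ℝ)) * ((2:ℝ) ^ (j:ℝ) + ‖x‖) ^ (-(τ + β)) := kern_eq j x
        _ ≤ (2:ℝ) ^ (τ * (j:ℝ)) * ((2:ℝ) ^ ((k:ℝ) - 1)) ^ (-(τ + β)) := by
            have h := Real.rpow_le_rpow_of_nonpos (two_rpow_pos ((k:ℝ) - 1)) hbase hexp_neg
            exact mul_le_mul_of_nonneg_left h (two_rpow_pos _).le
        _ = (2:ℝ) ^ (τ * (j:ℝ) + ((k:ℝ) - 1) * (-(τ + β))) := by
            rw [two_rpow_mul, two_rpow_add]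
        _ ≤ (2:ℝ) ^ (-β * (k:ℝ) + ((β + τ) + -δ * |((k - j : ℤ):ℝ)|)) := by
            apply two_rpow_le
            rw [habs]
            nlinarith [mul_nonneg (sub_nonneg.mpr hδτ)
              (by linarith : (0:ℝ) ≤ (k:ℝ) - (j:ℝ))]
        _ = _ := hφeq.symm
    · have hjkr : (k:ℝ) ≤ (j:ℝ) := by exact_mod_cast (by omega : k ≤ j)
      have habs : |((k - j : ℤ):ℝ)| = (j:ℝ) - (k:ℝ) := by
        rw [abs_of_nonpos] <;> push_cast <;> linarith
      have hbase : (2:ℝ) ^ ((j:ℝ)) ≤ (2:ℝ) ^ ((j:ℝ)) + ‖x‖ :=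
        le_add_of_nonneg_right (norm_nonneg x)
      calc kern n p s j x
          = (2:ℝ) ^ (τ * (j:ℝ)) * ((2:ℝ) ^ (j:ℝ) + ‖x‖) ^ (-(τ + β)) := kern_eq j x
        _ ≤ (2:ℝ) ^ (τ * (j:ℝ)) * ((2:ℝ) ^ ((j:ℝ))) ^ (-(τ + β)) := by
            have h := Real.rpow_le_rpow_of_nonpos (two_rpow_pos ((j:ℝ))) hbase hexp_neg
            exact mul_le_mul_of_nonneg_left h (two_rpow_pos _).le
        _ = (2:ℝ) ^ (τ * (j:ℝ) + (j:ℝ) * (-(τ + β))) := by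
            rw [two_rpow_mul, two_rpow_add]
        _ ≤ (2:ℝ) ^ (-β * (k:ℝ) + ((β + τ) + -δ * |((k - j : ℤ):ℝ)|)) := by
            apply two_rpow_le
            rw [habs]
            nlinarith [mul_nonneg (sub_nonneg.mpr hδβ)
              (by linarith : (0:ℝ) ≤ (j:ℝ) - (k:ℝ))]
        _ = _ := hφeq.symm
  -- kernel lower bound on the annulus A k
  have hlow : ∀ (k : ℤ) (x : Euc n), x ∈ A k →
      (2:ℝ) ^ (-(τ + β)) * (2:ℝ) ^ (-β * (k:ℝ)) ≤ kern n p s k x := by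
    intro k x hx
    obtain ⟨hx1, hx2⟩ := (hmem k x).mp hx
    have hbase : (2:ℝ) ^ ((k:ℝ)) + ‖x‖ ≤ (2:ℝ) ^ ((k:ℝ) + 1) := by
      rw [two_rpow_add, Real.rpow_one]
      linarith
    have hpos : (0:ℝ) < (2:ℝ) ^ ((k:ℝ)) + ‖x‖ := by
      have := two_rpow_pos ((k:ℝ))
      positivity
    calc (2:ℝ) ^ (-(τ + β)) * (2:ℝ) ^ (-β * (k:ℝ))
        = (2:ℝ) ^ (τ * (k:ℝ) + ((k:ℝ) + 1) * (-(τ + β))) := by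
          rw [← two_rpow_add]
          congr 1
          ring
      _ = (2:ℝ) ^ (τ * (k:ℝ)) * ((2:ℝ) ^ ((k:ℝ) + 1)) ^ (-(τ + β)) := by
          rw [two_rpow_mul, two_rpow_add]
      _ ≤ (2:ℝ) ^ (τ * (k:ℝ)) * ((2:ℝ) ^ ((k:ℝ)) + ‖x‖) ^ (-(τ + β)) := by
          have h := Real.rpow_le_rpow_of_nonpos hpos hbase (by linarith : -(τ + β) ≤ 0)
          exact mul_le_mul_of_nonneg_left h (two_rpow_pos _).le
      _ = kern n p s k x := (kern_eq k x).symm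
  -- measure of the annuli
  have hAle : ∀ k : ℤ, volume (A k) ≤ ENNReal.ofReal ((2:ℝ) ^ ((k:ℝ) * n)) * V := by
    intro k
    rw [← hball k]
    exact measure_mono Set.diff_subset
  have hy1 : (2:ℝ) ^ (-(n:ℝ)) < 1 :=
    Real.rpow_lt_one_of_one_lt_of_neg one_lt_two (by linarith)
  have hAge : ∀ k : ℤ, ENNReal.ofReal ((2:ℝ) ^ ((k:ℝ) * n) * (1 - (2:ℝ) ^ (-(n:ℝ)))) * V
      ≤ volume (A k) := by
    intro k
    have hsub : Metric.ball (0:Euc n) ((2:ℝ) ^ ((k:ℝ) - 1)) ⊆ Metric.ball 0 ((2:ℝ) ^ (k:ℝ)) :=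
      Metric.ball_subset_ball (two_rpow_le (by linarith))
    have hdiff : volume (A k)
        = volume (Metric.ball (0:Euc n) ((2:ℝ) ^ (k:ℝ)))
          - volume (Metric.ball (0:Euc n) ((2:ℝ) ^ ((k:ℝ) - 1))) := by
      rw [hAdef]
      exact measure_diff hsub measurableSet_ball.nullMeasurableSet measure_ball_lt_top.ne
    rw [hdiff, hball, hball']
    apply ENNReal.le_sub_of_add_le_right (ENNReal.mul_ne_top ENNReal.ofReal_ne_top hVtop.ne)
    rw [← add_mul, ← ENNReal.ofReal_add
      (by nlinarith [two_rpow_pos ((k:ℝ) * n), two_rpow_pos (-(n:ℝ))])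
      (two_rpow_pos _).le]
    have e2 : (2:ℝ) ^ (((k:ℝ) - 1) * (n:ℝ)) = (2:ℝ) ^ ((k:ℝ) * n) * (2:ℝ) ^ (-(n:ℝ)) := by
      rw [← two_rpow_add]
      congr 1
      ring
    rw [e2, show (2:ℝ) ^ ((k:ℝ) * n) * (1 - (2:ℝ) ^ (-(n:ℝ)))
        + (2:ℝ) ^ ((k:ℝ) * n) * (2:ℝ) ^ (-(n:ℝ)) = (2:ℝ) ^ ((k:ℝ) * n) by ring]
  -- the constants
  have hβp : β * p = (n:ℝ) := by rw [hβdef]; field_simp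
  set c : ℝ≥0∞ := ENNReal.ofReal ((1 - (2:ℝ) ^ (-(n:ℝ))) * (2:ℝ) ^ (-(τ + β) * p)) * V
    with hcdef
  have hc0 : 0 < c := by
    rw [hcdef]
    exact ENNReal.mul_pos
      (ENNReal.ofReal_pos.mpr (mul_pos (by linarith) (two_rpow_pos _))).ne' hV0.ne'
  have hctop : c ≠ ⊤ := ENNReal.mul_ne_top ENNReal.ofReal_ne_top hVtop.ne
  set Cu : ℝ≥0∞ := V * Φ ^ (p - 1) * Φ with hCudef
  have hCutop : Cu ≠ ⊤ :=
    ENNReal.mul_ne_top (ENNReal.mul_ne_top hVtop.ne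
      (ENNReal.rpow_ne_top_of_nonneg hp1.le hΦtop)) hΦtop
  refine ⟨1 + Cu.toReal + (c⁻¹).toReal, by
    have h1 : 0 ≤ Cu.toReal := ENNReal.toReal_nonneg
    have h2 : 0 ≤ (c⁻¹).toReal := ENNReal.toReal_nonneg
    linarith, ?_⟩
  intro a ha
  set F : ℤ → ℝ≥0∞ := fun j => ENNReal.ofReal (a j) with hFdef
  have hFp : ∀ j, ENNReal.ofReal (a j ^ p) = F j ^ p := fun j =>
    (ENNReal.ofReal_rpow_of_nonneg (ha j) hp0.le).symm
  have hsum : (∑' j : ℤ, ENNReal.ofReal (a j ^ p)) = ∑' j : ℤ, F j ^ p :=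
    tsum_congr hFp
  -- per-annulus upper bound
  have upper_ann : ∀ k : ℤ,
      (∫⁻ x in A k, (∑' j : ℤ, ENNReal.ofReal (a j * kern n p s j x)) ^ p)
      ≤ (V * Φ ^ (p - 1)) * ∑' j : ℤ, ENNReal.ofReal (φ (k - j)) * F j ^ p := by
    intro k
    set S : ℝ≥0∞ := ∑' j : ℤ, ENNReal.ofReal (φ (k - j)) * F j ^ p with hS
    have hpt : ∀ x ∈ A k, (∑' j : ℤ, ENNReal.ofReal (a j * kern n p s j x)) ^ p
        ≤ ENNReal.ofReal ((2:ℝ) ^ (-(n:ℝ) * (k:ℝ))) * (Φ ^ (p - 1) * S) := by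
      intro x hx
      have h1 : (∑' j : ℤ, ENNReal.ofReal (a j * kern n p s j x))
          ≤ ENNReal.ofReal ((2:ℝ) ^ (-β * (k:ℝ)))
            * ∑' j : ℤ, ENNReal.ofReal (φ (k - j)) * F j := by
        rw [← ENNReal.tsum_mul_left]
        refine ENNReal.tsum_le_tsum fun j => ?_
        calc ENNReal.ofReal (a j * kern n p s j x)
            ≤ ENNReal.ofReal (a j * ((2:ℝ) ^ (-β * (k:ℝ)) * φ (k - j))) :=
              ENNReal.ofReal_le_ofReal
                (mul_le_mul_of_nonneg_left (hkb k j x hx) (ha j))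
          _ = ENNReal.ofReal ((2:ℝ) ^ (-β * (k:ℝ)))
              * (ENNReal.ofReal (φ (k - j)) * F j) := by
              rw [show a j * ((2:ℝ) ^ (-β * (k:ℝ)) * φ (k - j))
                  = (2:ℝ) ^ (-β * (k:ℝ)) * (φ (k - j) * a j) by ring,
                ENNReal.ofReal_mul (two_rpow_pos _).le,
                ENNReal.ofReal_mul (hφ_nonneg _)]
      have h2 := ENNReal.rpow_le_rpow h1 hp0.le
      refine h2.trans ?_
      rw [ENNReal.mul_rpow_of_nonneg _ _ hp0.le]
      have e1 : ENNReal.ofReal ((2:ℝ) ^ (-β * (k:ℝ))) ^ p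
          = ENNReal.ofReal ((2:ℝ) ^ (-(n:ℝ) * (k:ℝ))) := by
        rw [ENNReal.ofReal_rpow_of_nonneg (two_rpow_pos _).le hp0.le, two_rpow_mul,
          show (-β * (k:ℝ)) * p = -(n:ℝ) * (k:ℝ) by linear_combination (-(k:ℝ)) * hβp]
      rw [e1]
      refine mul_le_mul_right ?_ _
      refine (aux_holder_pow (fun j => ENNReal.ofReal (φ (k - j))) F hp).trans ?_
      have hre : (∑' j : ℤ, ENNReal.ofReal (φ (k - j))) = Φ := by
        rw [hΦdef]
        exact (Equiv.subLeft k).tsum_eq (fun m => ENNReal.ofReal (φ m))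
      rw [hre]
    have hone : ENNReal.ofReal ((2:ℝ) ^ (-(n:ℝ) * (k:ℝ)))
        * ENNReal.ofReal ((2:ℝ) ^ ((k:ℝ) * n)) = 1 := by
      rw [← ENNReal.ofReal_mul (two_rpow_pos _).le, ← two_rpow_add,
        show -(n:ℝ) * (k:ℝ) + (k:ℝ) * (n:ℝ) = 0 by ring, Real.rpow_zero]
      simp
    calc (∫⁻ x in A k, (∑' j : ℤ, ENNReal.ofReal (a j * kern n p s j x)) ^ p)
        ≤ ∫⁻ _ in A k, ENNReal.ofReal ((2:ℝ) ^ (-(n:ℝ) * (k:ℝ))) * (Φ ^ (p - 1) * S) :=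
          setLIntegral_mono' (hAmeas k) hpt
      _ = ENNReal.ofReal ((2:ℝ) ^ (-(n:ℝ) * (k:ℝ))) * (Φ ^ (p - 1) * S) * volume (A k) :=
          setLIntegral_const _ _
      _ ≤ ENNReal.ofReal ((2:ℝ) ^ (-(n:ℝ) * (k:ℝ))) * (Φ ^ (p - 1) * S)
          * (ENNReal.ofReal ((2:ℝ) ^ ((k:ℝ) * n)) * V) := by
          gcongr
          exact hAle k
      _ = (ENNReal.ofReal ((2:ℝ) ^ (-(n:ℝ) * (k:ℝ)))
            * ENNReal.ofReal ((2:ℝ) ^ ((k:ℝ) * n))) * ((V * Φ ^ (p - 1)) * S) := by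
          ring
      _ = (V * Φ ^ (p - 1)) * S := by rw [hone, one_mul]
  -- per-annulus lower bound
  have lower_ann : ∀ k : ℤ, c * F k ^ p
      ≤ ∫⁻ x in A k, (∑' j : ℤ, ENNReal.ofReal (a j * kern n p s j x)) ^ p := by
    intro k
    set b : ℝ := (2:ℝ) ^ (-(τ + β)) * (2:ℝ) ^ (-β * (k:ℝ)) with hbdef
    have hb0 : 0 ≤ b := by
      have := two_rpow_pos (-(τ + β))
      have := two_rpow_pos (-β * (k:ℝ))
      positivity
    have hpt : ∀ x ∈ A k, (ENNReal.ofReal (a k * b)) ^ p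
        ≤ (∑' j : ℤ, ENNReal.ofReal (a j * kern n p s j x)) ^ p := by
      intro x hx
      refine ENNReal.rpow_le_rpow ?_ hp0.le
      refine le_trans ?_ (ENNReal.le_tsum k)
      exact ENNReal.ofReal_le_ofReal (mul_le_mul_of_nonneg_left (hlow k x hx) (ha k))
    have key : c * F k ^ p ≤ (ENNReal.ofReal (a k * b)) ^ p * volume (A k) := by
      refine le_trans (le_of_eq ?_) (mul_le_mul_right (hAge k) _)
      have e3 : (ENNReal.ofReal (a k * b)) ^ p
          = F k ^ p * ENNReal.ofReal (b ^ p) := by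
        rw [ENNReal.ofReal_mul (ha k), ENNReal.mul_rpow_of_nonneg _ _ hp0.le,
          ENNReal.ofReal_rpow_of_nonneg hb0 hp0.le]
      have hbp : b ^ p = (2:ℝ) ^ (-(τ + β) * p) * (2:ℝ) ^ (-(n:ℝ) * (k:ℝ)) := by
        rw [hbdef, Real.mul_rpow (two_rpow_pos _).le (two_rpow_pos _).le,
          two_rpow_mul, two_rpow_mul,
          show (-β * (k:ℝ)) * p = -(n:ℝ) * (k:ℝ) by linear_combination (-(k:ℝ)) * hβp]
      have e4 : ENNReal.ofReal ((2:ℝ) ^ (-(τ + β) * p) * (2:ℝ) ^ (-(n:ℝ) * (k:ℝ)))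
          * ENNReal.ofReal ((2:ℝ) ^ ((k:ℝ) * n) * (1 - (2:ℝ) ^ (-(n:ℝ))))
          = ENNReal.ofReal ((1 - (2:ℝ) ^ (-(n:ℝ))) * (2:ℝ) ^ (-(τ + β) * p)) := by
        rw [← ENNReal.ofReal_mul (by positivity)]
        congr 1
        have h23 : (2:ℝ) ^ (-(n:ℝ) * (k:ℝ)) * (2:ℝ) ^ ((k:ℝ) * (n:ℝ)) = 1 := by
          rw [← two_rpow_add, show -(n:ℝ) * (k:ℝ) + (k:ℝ) * (n:ℝ) = 0 by ring,
            Real.rpow_zero]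
        calc ((2:ℝ) ^ (-(τ + β) * p) * (2:ℝ) ^ (-(n:ℝ) * (k:ℝ)))
            * ((2:ℝ) ^ ((k:ℝ) * n) * (1 - (2:ℝ) ^ (-(n:ℝ))))
            = ((2:ℝ) ^ (-(n:ℝ) * (k:ℝ)) * (2:ℝ) ^ ((k:ℝ) * (n:ℝ)))
              * ((1 - (2:ℝ) ^ (-(n:ℝ))) * (2:ℝ) ^ (-(τ + β) * p)) := by ring
          _ = (1 - (2:ℝ) ^ (-(n:ℝ))) * (2:ℝ) ^ (-(τ + β) * p) := by rw [h23, one_mul]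
      calc c * F k ^ p
          = ENNReal.ofReal ((1 - (2:ℝ) ^ (-(n:ℝ))) * (2:ℝ) ^ (-(τ + β) * p)) * V
            * F k ^ p := by rw [hcdef]
        _ = (ENNReal.ofReal ((2:ℝ) ^ (-(τ + β) * p) * (2:ℝ) ^ (-(n:ℝ) * (k:ℝ)))
            * ENNReal.ofReal ((2:ℝ) ^ ((k:ℝ) * n) * (1 - (2:ℝ) ^ (-(n:ℝ))))) * V
            * F k ^ p := by rw [e4]
        _ = (F k ^ p * ENNReal.ofReal ((2:ℝ) ^ (-(τ + β) * p) * (2:ℝ) ^ (-(n:ℝ) * (k:ℝ))))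
            * (ENNReal.ofReal ((2:ℝ) ^ ((k:ℝ) * n) * (1 - (2:ℝ) ^ (-(n:ℝ)))) * V) := by
            ring
        _ = (ENNReal.ofReal (a k * b)) ^ p
            * (ENNReal.ofReal ((2:ℝ) ^ ((k:ℝ) * n) * (1 - (2:ℝ) ^ (-(n:ℝ)))) * V) := by
            rw [e3, hbp]
      -- leftover below is dead code reference guard
    refine key.trans ?_
    calc (ENNReal.ofReal (a k * b)) ^ p * volume (A k)
        = ∫⁻ _ in A k, (ENNReal.ofReal (a k * b)) ^ p := (setLIntegral_const _ _).symm
      _ ≤ ∫⁻ x in A k, (∑' j : ℤ, ENNReal.ofReal (a j * kern n p s j x)) ^ p :=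
          setLIntegral_mono' (hAmeas k) hpt
  -- summing up
  have sum_eq : (∑' k : ℤ, ∑' j : ℤ, ENNReal.ofReal (φ (k - j)) * F j ^ p)
      = Φ * ∑' j : ℤ, F j ^ p := by
    rw [ENNReal.tsum_comm]
    calc (∑' j : ℤ, ∑' k : ℤ, ENNReal.ofReal (φ (k - j)) * F j ^ p)
        = ∑' j : ℤ, (∑' k : ℤ, ENNReal.ofReal (φ (k - j))) * F j ^ p :=
          tsum_congr fun j => ENNReal.tsum_mul_right
      _ = ∑' j : ℤ, Φ * F j ^ p := by
          refine tsum_congr fun j => ?_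
          congr 1
          rw [hΦdef]
          exact (Equiv.subRight j).tsum_eq (fun m => ENNReal.ofReal (φ m))
      _ = Φ * ∑' j : ℤ, F j ^ p := ENNReal.tsum_mul_left
  have main_upper : (∫⁻ x : Euc n, (∑' j : ℤ, ENNReal.ofReal (a j * kern n p s j x)) ^ p)
      ≤ Cu * ∑' j : ℤ, F j ^ p := by
    rw [← lintegral_add_compl
      (fun x => (∑' j : ℤ, ENNReal.ofReal (a j * kern n p s j x)) ^ p)
      (MeasurableSet.iUnion hAmeas), setLIntegral_measure_zero _ _ hcompl, add_zero,
      lintegral_iUnion hAmeas hdisj]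
    calc (∑' k : ℤ, ∫⁻ x in A k, (∑' j : ℤ, ENNReal.ofReal (a j * kern n p s j x)) ^ p)
        ≤ ∑' k : ℤ, (V * Φ ^ (p - 1)) * ∑' j : ℤ, ENNReal.ofReal (φ (k - j)) * F j ^ p :=
          ENNReal.tsum_le_tsum upper_ann
      _ = (V * Φ ^ (p - 1)) * ∑' k : ℤ, ∑' j : ℤ, ENNReal.ofReal (φ (k - j)) * F j ^ p :=
          ENNReal.tsum_mul_left
      _ = (V * Φ ^ (p - 1)) * (Φ * ∑' j : ℤ, F j ^ p) := by rw [sum_eq]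
      _ = Cu * ∑' j : ℤ, F j ^ p := by rw [hCudef]; ring
  have main_lower : c * ∑' j : ℤ, F j ^ p
      ≤ ∫⁻ x : Euc n, (∑' j : ℤ, ENNReal.ofReal (a j * kern n p s j x)) ^ p := by
    calc c * ∑' j : ℤ, F j ^ p = ∑' k : ℤ, c * F k ^ p := ENNReal.tsum_mul_left.symm
      _ ≤ ∑' k : ℤ, ∫⁻ x in A k, (∑' j : ℤ, ENNReal.ofReal (a j * kern n p s j x)) ^ p :=
          ENNReal.tsum_le_tsum lower_ann
      _ = ∫⁻ x in ⋃ k, A k, (∑' j : ℤ, ENNReal.ofReal (a j * kern n p s j x)) ^ p :=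
          (lintegral_iUnion hAmeas hdisj _).symm
      _ ≤ ∫⁻ x : Euc n, (∑' j : ℤ, ENNReal.ofReal (a j * kern n p s j x)) ^ p :=
          setLIntegral_le_lintegral _ _
  have h1 : (0:ℝ) ≤ Cu.toReal := ENNReal.toReal_nonneg
  have h2 : (0:ℝ) ≤ (c⁻¹).toReal := ENNReal.toReal_nonneg
  constructor
  · have hcinv_fin : c⁻¹ ≠ ⊤ := ENNReal.inv_ne_top.mpr hc0.ne'
    have hC1 : c⁻¹ ≤ ENNReal.ofReal (1 + Cu.toReal + (c⁻¹).toReal) := by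
      conv_lhs => rw [← ENNReal.ofReal_toReal hcinv_fin]
      exact ENNReal.ofReal_le_ofReal (by linarith)
    have hC2 : (ENNReal.ofReal (1 + Cu.toReal + (c⁻¹).toReal))⁻¹ ≤ c := by
      have := ENNReal.inv_le_inv' hC1
      rwa [inv_inv] at this
    calc (ENNReal.ofReal (1 + Cu.toReal + (c⁻¹).toReal))⁻¹
          * ∑' j : ℤ, ENNReal.ofReal (a j ^ p)
        = (ENNReal.ofReal (1 + Cu.toReal + (c⁻¹).toReal))⁻¹ * ∑' j : ℤ, F j ^ p := by
          rw [hsum]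
      _ ≤ c * ∑' j : ℤ, F j ^ p := mul_le_mul_left hC2 _
      _ ≤ _ := main_lower
  · have hCu_le : Cu ≤ ENNReal.ofReal (1 + Cu.toReal + (c⁻¹).toReal) := by
      conv_lhs => rw [← ENNReal.ofReal_toReal hCutop]
      exact ENNReal.ofReal_le_ofReal (by linarith)
    calc (∫⁻ x : Euc n, (∑' j : ℤ, ENNReal.ofReal (a j * kern n p s j x)) ^ p)
        ≤ Cu * ∑' j : ℤ, F j ^ p := main_upper
      _ ≤ ENNReal.ofReal (1 + Cu.toReal + (c⁻¹).toReal) * ∑' j : ℤ, F j ^ p :=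
          mul_le_mul_left hCu_le _
      _ = ENNReal.ofReal (1 + Cu.toReal + (c⁻¹).toReal)
          * ∑' j : ℤ, ENNReal.ofReal (a j ^ p) := by rw [hsum]
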